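/- For every even integer q = 2r with r ≥ 1, there exists a natural number N such that for all n ≥ N, the number of sequences x ∈ {0,1,…,q−1}^n with #{j : x_j < r} ∈ [n/2 − 0.34·√n, n/2 + 0.34·√n] is at least q^(n−1). -/

import Mathlib

open Filter Real Finset
open scoped Topology Nat

lemma ratio_bound (n : ℕ) : ∀ j : ℕ, 2 * j ≤ n →
    (n.choose (n / 2) : ℝ) * (1 - 2 * j * (j + 1) / n) ≤ (n.choose (n / 2 + j) : ℝ) := by
  intro j
  induction j with
  | zero => intro _; simp
  | succ j ih =>
    intro hj
    have hn : 0 < n := by omega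
    have IH := ih (by omega)
    have hm1 : 2 * (n / 2) ≤ n := by omega
    have hm2 : n ≤ 2 * (n / 2) + 1 := by omega
    have hmj : n / 2 + j ≤ n := by omega
    set m := n / 2 with hm
    have key : (n.choose (m + j + 1) : ℝ) * (m + j + 1) = (n.choose (m + j) : ℝ) * (n - (m + j) : ℕ) := by
      exact_mod_cast congrArg (Nat.cast : ℕ → ℝ) (Nat.choose_succ_right_eq n (m + j))
    have hcast : ((n - (m + j) : ℕ) : ℝ) = (n : ℝ) - m - j := by
      push_cast [Nat.cast_sub hmj]; ring
    rw [hcast] at key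
    have hc0 : (0:ℝ) ≤ (n.choose m : ℝ) := by positivity
    have hc1 : (0:ℝ) ≤ (n.choose (m + j) : ℝ) := by positivity
    have hc2 : (0:ℝ) ≤ (n.choose (m + j + 1) : ℝ) := by positivity
    have hm1' : 2 * (m:ℝ) ≤ n := by exact_mod_cast hm1
    have hm2' : (n:ℝ) ≤ 2 * m + 1 := by exact_mod_cast hm2
    have hnR : (0:ℝ) < n := by exact_mod_cast hn
    have hjn : 2 * ((j:ℝ) + 1) ≤ n := by exact_mod_cast hj
    have hmjR : (0:ℝ) ≤ (n:ℝ) - m - j := by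
      have : ((m + j : ℕ) : ℝ) ≤ n := by exact_mod_cast hmj
      push_cast at this; linarith
    -- clear denominators
    have expand : ∀ c A : ℝ, c * (1 - A / n) = c * ((n:ℝ) - A) / n := by
      intro c A; field_simp
    have IH' : (n.choose m : ℝ) * ((n:ℝ) - 2 * j * (j+1)) ≤ (n.choose (m+j) : ℝ) * n := by
      rw [expand] at IH
      calc (n.choose m : ℝ) * ((n:ℝ) - 2 * j * (j+1))
          = (n.choose m : ℝ) * ((n:ℝ) - 2 * j * (j+1)) / n * n := by field_simp
        _ ≤ (n.choose (m+j) : ℝ) * n := by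
            apply mul_le_mul_of_nonneg_right IH (le_of_lt hnR)
    rw [show ((j:ℕ)+1 : ℕ) = j + 1 from rfl]
    push_cast
    rw [show m + ((j:ℕ) + 1) = m + j + 1 from by ring]
    rw [expand, div_le_iff₀ hnR]
    set s' : ℝ := (n:ℝ) - 2 * ((j:ℝ)+1) * ((j:ℝ)+1+1) with hs'
    rcases le_or_gt s' 0 with hneg | hpos
    · have : (n.choose m : ℝ) * s' ≤ 0 := mul_nonpos_of_nonneg_of_nonpos hc0 hneg
      nlinarith
    · have h5 : s' * ((m:ℝ) + j + 1) ≤ ((n:ℝ) - 2 * j * (j+1)) * ((n:ℝ) - m - j) := by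
        have hs : (0:ℝ) < (n:ℝ) - 2 * j * (j+1) := by simp only [hs'] at hpos; nlinarith [hpos]
        nlinarith [mul_nonneg hs.le (by linarith : (0:ℝ) ≤ (n:ℝ) - 2*(m:ℝ)),
          mul_nonneg (by positivity : (0:ℝ) ≤ 2*(j:ℝ)*((j:ℝ)+1)) (by positivity : (0:ℝ) ≤ 2*(j:ℝ)+1),
          mul_nonneg (by positivity : (0:ℝ) ≤ (j:ℝ)+1) (by linarith : (0:ℝ) ≤ 2*(m:ℝ)+1-(n:ℝ)),
          mul_nonneg (by positivity : (0:ℝ) ≤ (j:ℝ)+1) (by positivity : (0:ℝ) ≤ (j:ℝ)+1)]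
      have h4 : (n.choose m : ℝ) * (s' * ((m:ℝ) + j + 1)) ≤ (n.choose (m+j+1) : ℝ) * ((m:ℝ)+j+1) * n := by
        calc (n.choose m : ℝ) * (s' * ((m:ℝ) + j + 1))
            ≤ (n.choose m : ℝ) * (((n:ℝ) - 2 * j * (j+1)) * ((n:ℝ) - m - j)) :=
              mul_le_mul_of_nonneg_left h5 hc0
          _ = (n.choose m : ℝ) * ((n:ℝ) - 2 * j * (j+1)) * ((n:ℝ) - m - j) := by ring
          _ ≤ (n.choose (m+j) : ℝ) * n * ((n:ℝ) - m - j) :=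
              mul_le_mul_of_nonneg_right IH' hmjR
          _ = (n.choose (m+j) : ℝ) * ((n:ℝ) - m - j) * n := by ring
          _ = (n.choose (m+j+1) : ℝ) * ((m:ℝ)+j+1) * n := by rw [key]
      have hpos' : (0:ℝ) < (m:ℝ) + j + 1 := by positivity
      have := h4
      rw [show (n.choose m : ℝ) * (s' * ((m:ℝ) + j + 1)) = (n.choose m : ℝ) * s' * ((m:ℝ)+j+1) from by ring,
          show (n.choose (m+j+1) : ℝ) * ((m:ℝ)+j+1) * n = (n.choose (m+j+1) : ℝ) * n * ((m:ℝ)+j+1) from by ring] at this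
      exact le_of_mul_le_mul_right this hpos'


noncomputable def bb (n : ℕ) : ℝ := (n.choose (n / 2) : ℝ) / 2 ^ n

lemma even_central : Tendsto (fun k : ℕ => ((2*k).choose k : ℝ) * Real.sqrt k / 4 ^ k)
    atTop (𝓝 (1 / Real.sqrt π)) := by
  have h2 : Tendsto (fun k : ℕ => 2 * k) atTop atTop :=
    tendsto_id.const_mul_atTop' two_pos
  have h1 : Tendsto (fun k : ℕ => Stirling.stirlingSeq (2*k) / (Stirling.stirlingSeq k)^2)
      atTop (𝓝 (Real.sqrt π / (Real.sqrt π)^2)) :=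
    (Stirling.tendsto_stirlingSeq_sqrt_pi.comp h2).div
      (Stirling.tendsto_stirlingSeq_sqrt_pi.pow 2) (by positivity)
  have heq : Real.sqrt π / (Real.sqrt π)^2 = 1 / Real.sqrt π := by
    rw [sq]
    rw [div_mul_eq_div_div, div_self (by positivity : Real.sqrt π ≠ 0)]
  rw [heq] at h1
  apply h1.congr'
  filter_upwards [eventually_ge_atTop 1] with k hk
  have hk0 : (0:ℝ) < (k:ℝ) := by exact_mod_cast hk
  have hsk : (0:ℝ) < Real.sqrt k := Real.sqrt_pos.mpr hk0
  set C : ℝ := ((2*k).choose k : ℝ) with hC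
  set F : ℝ := (k ! : ℝ) with hF
  set G : ℝ := ((k:ℝ)/Real.exp 1)^k with hG
  have hF0 : F ≠ 0 := by simp [hF, Nat.factorial_ne_zero, Nat.cast_ne_zero]
  have hG0 : G ≠ 0 := by
    have : (0:ℝ) < (k:ℝ)/Real.exp 1 := by positivity
    positivity
  have hfac : C * F * F = ((2*k)! : ℝ) := by
    have h := Nat.choose_mul_factorial_mul_factorial (show k ≤ 2*k by omega)
    rw [show 2*k - k = k by omega] at h
    simp only [hC, hF]
    exact_mod_cast congrArg (Nat.cast : ℕ → ℝ) h
  have e44 : Real.sqrt (2*((2*k : ℕ):ℝ)) = 2 * Real.sqrt k := by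
    push_cast
    rw [show (2:ℝ)*(2*(k:ℝ)) = 4 * (k:ℝ) by ring]
    rw [show (4:ℝ)*(k:ℝ) = (2:ℝ)^2 * (k:ℝ) by norm_num]
    rw [Real.sqrt_mul (by positivity), Real.sqrt_sq (by norm_num)]
  have p1 : (((2*k : ℕ):ℝ)/Real.exp 1)^(2*k) = (4:ℝ)^k * G^2 := by
    push_cast
    rw [pow_mul]
    rw [show ((2*(k:ℝ))/Real.exp 1)^2 = 4 * ((k:ℝ)/Real.exp 1)^2 by ring]
    rw [mul_pow, hG, ← pow_mul, ← pow_mul, Nat.mul_comm 2 k]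
  have hnum : Stirling.stirlingSeq (2*k) = C * F^2 / (2 * Real.sqrt k * 4^k * G^2) := by
    rw [Stirling.stirlingSeq, ← hfac, e44, p1]
    ring
  have hsq : (Stirling.stirlingSeq k)^2 = F^2 / (2*(k:ℝ)*G^2) := by
    rw [Stirling.stirlingSeq, div_pow, mul_pow, Real.sq_sqrt (by positivity)]
  have hdiv : (2*(k:ℝ))/(2*Real.sqrt k) = Real.sqrt k := by
    rw [mul_div_mul_left _ _ (two_ne_zero)]
    exact Real.div_sqrt
  calc Stirling.stirlingSeq (2*k) / (Stirling.stirlingSeq k)^2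
      = C * ((2*(k:ℝ))/(2*Real.sqrt k)) / 4^k := by
        rw [hnum, hsq]
        field_simp
    _ = C * Real.sqrt k / 4^k := by rw [hdiv]

lemma bb_odd (k : ℕ) : bb (2*k+1) = bb (2*k+2) := by
  have h1 : (2*k+1)/2 = k := by omega
  have h2 : (2*k+2)/2 = k+1 := by omega
  have h3 : (2*k+2).choose (k+1) = 2 * ((2*k+1).choose k) := by
    rw [show 2*k+2 = 2*k+1+1 by omega, Nat.choose_succ_succ', Nat.choose_symm_half k]
    ring
  rw [bb, bb, h1, h2, h3]
  push_cast
  rw [pow_succ]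
  field_simp
  ring

lemma bb_eq (n : ℕ) : bb n = bb (2*((n+1)/2)) := by
  rcases Nat.even_or_odd n with ⟨k, hk⟩ | ⟨k, hk⟩
  · subst hk; norm_num [show (k+k+1)/2 = k by omega, two_mul]
  · subst hk
    rw [show 2*((2*k+1+1)/2) = 2*k+2 by omega]
    exact bb_odd k

lemma tendsto_sqrt_bb : Tendsto (fun n : ℕ => Real.sqrt n * bb n) atTop (𝓝 (Real.sqrt (2/π))) := by
  have heq : Real.sqrt (2/π) = Real.sqrt 2 * (1 / Real.sqrt π) := by
    rw [Real.sqrt_div (by norm_num : (0:ℝ) ≤ 2)]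
    ring
  have hg : Tendsto (fun k : ℕ => Real.sqrt (2*(k:ℝ)) * bb (2*k)) atTop (𝓝 (Real.sqrt (2/π))) := by
    rw [heq]
    apply (even_central.const_mul (Real.sqrt 2)).congr
    intro k
    rw [bb, show (2*k)/2 = k by omega]
    rw [Real.sqrt_mul (by norm_num : (0:ℝ) ≤ 2)]
    rw [show ((2:ℝ))^(2*k) = 4^k by rw [pow_mul]; norm_num]
    push_cast
    ring
  have hc : Tendsto (fun n : ℕ => (n+1)/2) atTop atTop :=
    Filter.tendsto_atTop_atTop.2 fun b => ⟨2*b, fun n hn => by omega⟩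
  have hgc : Tendsto (fun n : ℕ => Real.sqrt (2*(((n+1)/2 : ℕ):ℝ)) * bb (2*((n+1)/2)))
      atTop (𝓝 (Real.sqrt (2/π))) := hg.comp hc
  have hposc : ∀ n : ℕ, 1 ≤ n → (0:ℝ) < 2*(((n+1)/2 : ℕ):ℝ) := by
    intro n hn
    have : 1 ≤ (n+1)/2 := by omega
    have : (1:ℝ) ≤ (((n+1)/2 : ℕ):ℝ) := by exact_mod_cast this
    linarith
  have h1 : Tendsto (fun n : ℕ => (n:ℝ) / (2*(((n+1)/2 : ℕ):ℝ))) atTop (𝓝 1) := by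
    apply tendsto_of_tendsto_of_tendsto_of_le_of_le'
      (tendsto_natCast_div_add_atTop (1:ℝ)) tendsto_const_nhds
    · filter_upwards [eventually_ge_atTop 1] with n hn
      have hle2 : 2*(((n+1)/2 : ℕ):ℝ) ≤ (n:ℝ)+1 := by
        exact_mod_cast (show 2*((n+1)/2) ≤ n+1 by omega)
      have hpos := hposc n hn
      gcongr
    · filter_upwards [eventually_ge_atTop 1] with n hn
      have hle : (n:ℝ) ≤ 2*(((n+1)/2 : ℕ):ℝ) := by
        exact_mod_cast (show n ≤ 2*((n+1)/2) by omega)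
      exact div_le_one_of_le₀ hle (le_of_lt (hposc n hn))
  have hratio : Tendsto (fun n : ℕ => Real.sqrt ((n:ℝ) / (2*(((n+1)/2 : ℕ):ℝ)))) atTop (𝓝 1) := by
    have h2 := (Real.continuous_sqrt.tendsto 1).comp h1
    rw [Real.sqrt_one] at h2
    exact h2
  have hmul := hgc.mul hratio
  rw [mul_one] at hmul
  apply hmul.congr'
  filter_upwards [eventually_ge_atTop 1] with n hn
  have hpos := hposc n hn
  have hsq : Real.sqrt (2*(((n+1)/2 : ℕ):ℝ)) ≠ 0 := by positivity
  rw [← bb_eq n]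
  calc Real.sqrt (2*(((n+1)/2 : ℕ):ℝ)) * bb n * Real.sqrt ((n:ℝ) / (2*(((n+1)/2 : ℕ):ℝ)))
      = Real.sqrt (2*(((n+1)/2 : ℕ):ℝ)) * bb n * (Real.sqrt (n:ℝ) / Real.sqrt (2*(((n+1)/2 : ℕ):ℝ))) := by
        rw [Real.sqrt_div (Nat.cast_nonneg n)]
    _ = Real.sqrt (n:ℝ) / Real.sqrt (2*(((n+1)/2 : ℕ):ℝ)) * Real.sqrt (2*(((n+1)/2 : ℕ):ℝ)) * bb n := by
        ring
    _ = Real.sqrt n * bb n := by rw [div_mul_cancel₀ _ hsq]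

noncomputable def JJ (n : ℕ) : ℕ := ⌊(0.34:ℝ) * Real.sqrt n⌋₊

noncomputable def PP (n : ℕ) : ℝ := ∑ j ∈ Icc 1 (JJ n), (1 - 2*(j:ℝ)*((j:ℝ)+1)/(n:ℝ))

lemma sum_jj : ∀ J : ℕ, (3:ℝ) * ∑ j ∈ Icc 1 J, (j:ℝ)*((j:ℝ)+1) = (J:ℝ)*((J:ℝ)+1)*((J:ℝ)+2) := by
  intro J
  induction J with
  | zero => simp
  | succ J ih =>
    rw [Finset.sum_Icc_succ_top (by omega : 1 ≤ J + 1)]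
    push_cast
    push_cast at ih
    linarith [ih]

lemma PP_eq (n : ℕ) : PP n = (JJ n : ℝ) - 2*((JJ n:ℝ)*((JJ n:ℝ)+1)*((JJ n:ℝ)+2))/(3*(n:ℝ)) := by
  rw [PP, Finset.sum_sub_distrib, Finset.sum_const, Nat.card_Icc]
  have h1 : ∑ j ∈ Icc 1 (JJ n), 2*(j:ℝ)*((j:ℝ)+1)/(n:ℝ)
      = 2 * (∑ j ∈ Icc 1 (JJ n), (j:ℝ)*((j:ℝ)+1)) / n := by
    rw [Finset.mul_sum, Finset.sum_div]
    apply Finset.sum_congr rfl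
    intro j _
    ring
  rw [h1]
  have h2 : (∑ j ∈ Icc 1 (JJ n), (j:ℝ)*((j:ℝ)+1)) = ((JJ n:ℝ)*((JJ n:ℝ)+1)*((JJ n:ℝ)+2))/3 := by
    linarith [sum_jj (JJ n)]
  rw [h2]
  simp
  ring

lemma tendsto_sqrtn : Tendsto (fun n : ℕ => Real.sqrt n) atTop atTop := by
  apply Filter.tendsto_atTop_atTop.2
  intro b
  refine ⟨⌈b⌉₊^2, fun n hn => ?_⟩
  calc b ≤ (⌈b⌉₊ : ℝ) := Nat.le_ceil b
    _ = Real.sqrt ((⌈b⌉₊:ℝ)^2) := by rw [Real.sqrt_sq (Nat.cast_nonneg _)]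
    _ ≤ Real.sqrt n := by
        apply Real.sqrt_le_sqrt
        exact_mod_cast hn

lemma tendsto_inv_sqrt : Tendsto (fun n : ℕ => 1 / Real.sqrt n) atTop (𝓝 0) := by
  rw [show (fun n : ℕ => 1 / Real.sqrt n) = (fun n : ℕ => Real.sqrt n)⁻¹ by funext n; simp [one_div]]
  exact tendsto_sqrtn.inv_tendsto_atTop

lemma tendsto_u : Tendsto (fun n : ℕ => (JJ n : ℝ) / Real.sqrt n) atTop (𝓝 0.34) := by
  have hlow : Tendsto (fun n : ℕ => (0.34:ℝ) - 1 / Real.sqrt n) atTop (𝓝 0.34) := by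
    have := (tendsto_const_nhds (x := (0.34:ℝ)) (f := atTop (α := ℕ))).sub tendsto_inv_sqrt
    simpa using this
  apply tendsto_of_tendsto_of_tendsto_of_le_of_le' hlow tendsto_const_nhds
  · filter_upwards [eventually_ge_atTop 1] with n hn
    have hs : (0:ℝ) < Real.sqrt n := Real.sqrt_pos.mpr (by exact_mod_cast hn)
    have hfl : (0.34:ℝ) * Real.sqrt n - 1 < JJ n := Nat.sub_one_lt_floor _
    rw [le_div_iff₀ hs]
    have h1 : (1/Real.sqrt n) * Real.sqrt n = 1 := by field_simp
    nlinarith [hfl, h1, hs]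
  · filter_upwards [eventually_ge_atTop 1] with n hn
    have hs : (0:ℝ) < Real.sqrt n := Real.sqrt_pos.mpr (by exact_mod_cast hn)
    have hfl : (JJ n : ℝ) ≤ 0.34 * Real.sqrt n := Nat.floor_le (by positivity)
    rw [div_le_iff₀ hs]
    linarith

lemma tendsto_vw (c : ℝ) : Tendsto (fun n : ℕ => ((JJ n : ℝ) + c) / Real.sqrt n) atTop (𝓝 0.34) := by
  have h := tendsto_u.add (tendsto_inv_sqrt.const_mul c)
  rw [mul_zero, add_zero] at h
  apply h.congr
  intro n
  rw [mul_one_div, ← add_div]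

noncomputable def AA : ℝ := 0.34 - 2/3 * (0.34*0.34*0.34)

lemma tendsto_main : Tendsto (fun n : ℕ => bb n * PP n) atTop (𝓝 (Real.sqrt (2/π) * AA)) := by
  have h := tendsto_sqrt_bb.mul
    (tendsto_u.sub (((tendsto_u.mul (tendsto_vw 1)).mul (tendsto_vw 2)).const_mul (2/3)))
  rw [show (0.34:ℝ) - 2/3 * (0.34*0.34*0.34) = AA from rfl] at h
  apply h.congr'
  filter_upwards [eventually_ge_atTop 1] with n hn
  have hs : (0:ℝ) < Real.sqrt n := Real.sqrt_pos.mpr (by exact_mod_cast hn)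
  rw [PP_eq]
  set s := Real.sqrt (n:ℝ) with hsdef
  have hn' : (n:ℝ) = s * s := (Real.mul_self_sqrt (Nat.cast_nonneg n)).symm
  rw [hn']
  field_simp

lemma quarter_lt : (1/4 : ℝ) < Real.sqrt (2/π) * AA := by
  have hA : (0:ℝ) < AA := by norm_num [AA]
  have hπ0 : (0:ℝ) < π := Real.pi_pos
  have h32 : π < 32 * AA^2 := by
    calc π < 3.15 := Real.pi_lt_d2
      _ ≤ 32 * AA^2 := by norm_num [AA]
  have hkey : (1/(4*AA)) < Real.sqrt (2/π) := by
    rw [show (1/(4*AA)) = Real.sqrt ((1/(4*AA))^2) from (Real.sqrt_sq (by positivity)).symm]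
    apply Real.sqrt_lt_sqrt (by positivity)
    rw [div_pow, one_pow]
    rw [div_lt_div_iff₀ (by positivity) hπ0]
    calc 1 * π = π := one_mul π
      _ < 32*AA^2 := h32
      _ ≤ 2 * (4*AA)^2 := by ring_nf; linarith [sq_nonneg AA]
  calc (1/4 : ℝ) = (1/(4*AA)) * AA := by field_simp
    _ < Real.sqrt (2/π) * AA := by exact mul_lt_mul_of_pos_right hkey hA

lemma eventually_quarter : ∀ᶠ n in atTop, (1/4 : ℝ) < bb n * PP n :=
  tendsto_main.eventually (eventually_gt_nhds quarter_lt)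

open scoped Classical in
lemma sum_reflect (n : ℕ) (p : ℕ → Prop) :
    ∑ k ∈ (range (n+1)).filter p, n.choose k
      = ∑ k ∈ (range (n+1)).filter (fun k => p (n - k)), n.choose k := by
  apply Finset.sum_nbij' (fun k => n - k) (fun k => n - k)
  · intro a ha
    simp only [Finset.mem_filter, Finset.mem_range] at ha ⊢
    refine ⟨by omega, ?_⟩
    rw [Nat.sub_sub_self (by omega : a ≤ n)]
    exact ha.2
  · intro a ha
    simp only [Finset.mem_filter, Finset.mem_range] at ha ⊢
    exact ⟨by omega, ha.2⟩
  · intro a ha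
    simp only [Finset.mem_filter, Finset.mem_range] at ha
    omega
  · intro a ha
    simp only [Finset.mem_filter, Finset.mem_range] at ha
    omega
  · intro a ha
    simp only [Finset.mem_filter, Finset.mem_range] at ha
    exact (Nat.choose_symm (by omega : a ≤ n)).symm

open scoped Classical in
lemma W_ge (n : ℕ) (hn : 1 ≤ n) (h2J : 2 * JJ n ≤ n)
    (hJle : (JJ n : ℝ) ≤ 0.34 * Real.sqrt n)
    (hM : 2^n < 4 * ∑ j ∈ Icc 1 (JJ n), n.choose (n/2 + j)) :
    2^(n-1) ≤ ∑ k ∈ (range (n+1)).filter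
      (fun k : ℕ => ((n:ℝ)/2 - 0.34*Real.sqrt n ≤ (k:ℝ) ∧ (k:ℝ) ≤ (n:ℝ)/2 + 0.34*Real.sqrt n)),
      n.choose k := by
  have ht0 : (0:ℝ) ≤ 0.34*Real.sqrt n := by positivity
  set t : ℝ := 0.34*Real.sqrt n with htdef
  set win : ℕ → Prop := fun k : ℕ => ((n:ℝ)/2 - t ≤ (k:ℝ) ∧ (k:ℝ) ≤ (n:ℝ)/2 + t) with hwin
  set lo : ℕ → Prop := fun k : ℕ => (k:ℝ) < (n:ℝ)/2 - t with hlo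
  set hi : ℕ → Prop := fun k : ℕ => (n:ℝ)/2 + t < (k:ℝ) with hhi
  set mid : ℕ → Prop := fun k : ℕ => (n:ℝ)/2 < (k:ℝ) with hmid
  set W := ∑ k ∈ (range (n+1)).filter win, n.choose k with hWdef
  set L := ∑ k ∈ (range (n+1)).filter lo, n.choose k with hLdef
  set U := ∑ k ∈ (range (n+1)).filter hi, n.choose k with hUdef
  set H := ∑ k ∈ (range (n+1)).filter mid, n.choose k with hHdef
  set M := ∑ j ∈ Icc 1 (JJ n), n.choose (n/2 + j) with hMdef
  have hm1 : 2 * (n / 2) ≤ n := by omega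
  have hm2 : n ≤ 2 * (n / 2) + 1 := by omega
  have hmR1 : 2 * ((n/2 : ℕ):ℝ) ≤ (n:ℝ) := by exact_mod_cast hm1
  have hmR2 : (n:ℝ) ≤ 2 * ((n/2 : ℕ):ℝ) + 1 := by exact_mod_cast hm2
  have hcast2 : ∀ k : ℕ, k ≤ n → ((n - k : ℕ) : ℝ) = (n:ℝ) - (k:ℝ) := by
    intro k hk
    push_cast [Nat.cast_sub hk]
    ring
  -- (1) total split
  have hdisj : Disjoint ((range (n+1)).filter lo) ((range (n+1)).filter hi) := by
    rw [Finset.disjoint_left]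
    intro a ha hb
    simp only [Finset.mem_filter, hlo, hhi] at ha hb
    linarith [ha.2, hb.2]
  have hsplit : W + (L + U) = 2^n := by
    have h1 : W + ∑ k ∈ (range (n+1)).filter (fun k => ¬ win k), n.choose k = 2^n := by
      rw [hWdef, Finset.sum_filter_add_sum_filter_not, Nat.sum_range_choose]
    have h2 : (range (n+1)).filter (fun k => ¬ win k)
        = ((range (n+1)).filter lo) ∪ ((range (n+1)).filter hi) := by
      rw [← Finset.filter_or]
      apply Finset.filter_congr
      intro k _
      simp only [hwin, hlo, hhi, not_and_or, not_le, eq_iff_iff]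
      try tauto
    rw [← h1, h2, Finset.sum_union hdisj]
  -- (2) L = U
  have hLU : L = U := by
    rw [hLdef, hUdef, sum_reflect n lo]
    apply Finset.sum_congr
    · apply Finset.filter_congr
      intro k hk
      rw [Finset.mem_range] at hk
      have hk' : k ≤ n := by omega
      simp only [hlo, hhi, eq_iff_iff, hcast2 k hk']
      constructor <;> intro h <;> linarith
    · intros; rfl
  -- (3) 2H ≤ 2^n
  have hH2 : 2 * H ≤ 2^n := by
    have hrefl : H = ∑ k ∈ (range (n+1)).filter (fun k : ℕ => (k:ℝ) < (n:ℝ)/2), n.choose k := by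
      rw [hHdef, sum_reflect n mid]
      apply Finset.sum_congr
      · apply Finset.filter_congr
        intro k hk
        rw [Finset.mem_range] at hk
        have hk' : k ≤ n := by omega
        simp only [hmid, eq_iff_iff, hcast2 k hk']
        constructor <;> intro h <;> linarith
      · intros; rfl
    have hdisj2 : Disjoint ((range (n+1)).filter mid)
        ((range (n+1)).filter (fun k : ℕ => (k:ℝ) < (n:ℝ)/2)) := by
      rw [Finset.disjoint_left]
      intro a ha hb
      simp only [Finset.mem_filter, hmid] at ha hb
      linarith [ha.2, hb.2]
    calc 2 * H = H + H := by ring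
      _ = ∑ k ∈ ((range (n+1)).filter mid) ∪ ((range (n+1)).filter (fun k : ℕ => (k:ℝ) < (n:ℝ)/2)),
            n.choose k := by rw [Finset.sum_union hdisj2, ← hrefl]
      _ ≤ ∑ k ∈ range (n+1), n.choose k := by
          apply Finset.sum_le_sum_of_subset
          apply Finset.union_subset (Finset.filter_subset _ _) (Finset.filter_subset _ _)
      _ = 2^n := Nat.sum_range_choose n
  -- (4) U + M ≤ H
  have hUM : U + M ≤ H := by
    set B := (Icc 1 (JJ n)).image (fun j => n/2 + j) with hBdef
    have hMB : M = ∑ k ∈ B, n.choose k := by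
      rw [hMdef, hBdef, Finset.sum_image]
      intro a _ b _ h
      simp only at h
      omega
    have hBsub : B ⊆ (range (n+1)).filter mid := by
      intro k hk
      rw [hBdef, Finset.mem_image] at hk
      obtain ⟨j, hj, rfl⟩ := hk
      rw [Finset.mem_Icc] at hj
      rw [Finset.mem_filter, Finset.mem_range]
      constructor
      · omega
      · simp only [hmid]
        push_cast
        have : (1:ℝ) ≤ (j:ℝ) := by exact_mod_cast hj.1
        linarith
    have hdisj3 : Disjoint ((range (n+1)).filter hi) B := by
      rw [Finset.disjoint_right]
      intro k hk hk2
      rw [hBdef, Finset.mem_image] at hk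
      obtain ⟨j, hj, rfl⟩ := hk
      rw [Finset.mem_Icc] at hj
      rw [Finset.mem_filter] at hk2
      have hjR : (j:ℝ) ≤ (JJ n : ℝ) := by exact_mod_cast hj.2
      have : ((n/2 + j : ℕ):ℝ) ≤ (n:ℝ)/2 + t := by
        push_cast
        rw [htdef]
        linarith
      have h2 := hk2.2
      simp only [hhi] at h2
      linarith
    have hhisub : (range (n+1)).filter hi ⊆ (range (n+1)).filter mid := by
      intro k hk
      rw [Finset.mem_filter] at hk ⊢
      refine ⟨hk.1, ?_⟩
      have := hk.2
      simp only [hhi] at this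
      simp only [hmid]
      linarith
    calc U + M = ∑ k ∈ ((range (n+1)).filter hi) ∪ B, n.choose k := by
          rw [Finset.sum_union hdisj3, hMB]
      _ ≤ H := by
          apply Finset.sum_le_sum_of_subset
          exact Finset.union_subset hhisub hBsub
  have hpow : (2:ℕ)^n = 2 * 2^(n-1) := by
    rw [← pow_succ']
    congr 1
    omega
  omega

lemma eventually_Mbound : ∀ᶠ n in atTop, 2^n < 4 * ∑ j ∈ Icc 1 (JJ n), n.choose (n/2 + j) := by
  filter_upwards [eventually_quarter, eventually_ge_atTop 1] with n hq hn
  have hs1 : (1:ℝ) ≤ Real.sqrt n := by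
    rw [show (1:ℝ) = Real.sqrt 1 from Real.sqrt_one.symm]
    apply Real.sqrt_le_sqrt
    exact_mod_cast hn
  have hss : Real.sqrt n * Real.sqrt n = (n:ℝ) := Real.mul_self_sqrt (Nat.cast_nonneg n)
  have hJle : (JJ n : ℝ) ≤ 0.34 * Real.sqrt n := Nat.floor_le (by positivity)
  have h2J : 2 * JJ n ≤ n := by
    have : (2 * JJ n : ℝ) ≤ (n:ℝ) := by
      push_cast
      nlinarith [hJle, hs1, hss]
    exact_mod_cast this
  have hterm : ∀ j ∈ Icc 1 (JJ n),
      (n.choose (n/2) : ℝ) * (1 - 2*(j:ℝ)*((j:ℝ)+1)/(n:ℝ)) ≤ (n.choose (n/2 + j) : ℝ) := by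
    intro j hj
    rw [Finset.mem_Icc] at hj
    exact ratio_bound n j (by omega)
  have hsum : (n.choose (n/2) : ℝ) * PP n ≤ ∑ j ∈ Icc 1 (JJ n), (n.choose (n/2+j) : ℝ) := by
    rw [PP, Finset.mul_sum]
    exact Finset.sum_le_sum hterm
  have hq' : (2:ℝ)^n < 4 * ((n.choose (n/2) : ℝ) * PP n) := by
    rw [bb] at hq
    have h2n : (0:ℝ) < 2^n := by positivity
    rw [div_mul_eq_mul_div, lt_div_iff₀ h2n] at hq
    linarith
  have hfin : (2:ℝ)^n < 4 * ∑ j ∈ Icc 1 (JJ n), (n.choose (n/2+j) : ℝ) := by linarith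
  exact_mod_cast hfin

open scoped Classical in
theorem exists_N_card_polarity_balanced_ge' (r : ℕ) (hr : 1 ≤ r) :
    ∃ N : ℕ, ∀ n : ℕ, N ≤ n →
      (2 * r) ^ (n - 1) ≤ Nat.card {x : Fin n → Fin (2 * r) //
        (n : ℝ) / 2 - 0.34 * Real.sqrt n ≤ ((Finset.univ.filter fun j => (x j : ℕ) < r).card : ℝ) ∧
        ((Finset.univ.filter fun j => (x j : ℕ) < r).card : ℝ) ≤ (n : ℝ) / 2 + 0.34 * Real.sqrt n} := by
  obtain ⟨N0, hN0⟩ := eventually_atTop.1 (eventually_Mbound.and (eventually_ge_atTop 1))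
  refine ⟨N0, fun n hn => ?_⟩
  obtain ⟨hMb, hn1⟩ := hN0 n hn
  have hs1 : (1:ℝ) ≤ Real.sqrt n := by
    rw [show (1:ℝ) = Real.sqrt 1 from Real.sqrt_one.symm]
    apply Real.sqrt_le_sqrt
    exact_mod_cast hn1
  have hss : Real.sqrt n * Real.sqrt n = (n:ℝ) := Real.mul_self_sqrt (Nat.cast_nonneg n)
  have hJle : (JJ n : ℝ) ≤ 0.34 * Real.sqrt n := Nat.floor_le (by positivity)
  have h2J : 2 * JJ n ≤ n := by
    have h : (2 * JJ n : ℝ) ≤ (n:ℝ) := by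
      push_cast
      nlinarith [hJle, hs1, hss]
    exact_mod_cast h
  have hW := W_ge n hn1 h2J hJle hMb
  set K := (range (n+1)).filter
      (fun k : ℕ => ((n:ℝ)/2 - 0.34*Real.sqrt n ≤ (k:ℝ) ∧ (k:ℝ) ≤ (n:ℝ)/2 + 0.34*Real.sqrt n)) with hK
  set D := K.sigma (fun k => Finset.powersetCard k (Finset.univ : Finset (Fin n))) with hDdef
  set xfun : ↥D × (Fin n → Fin r) → (Fin n → Fin (2*r)) := fun p j =>
    if j ∈ p.1.1.2 then ⟨(p.2 j : ℕ), by have := (p.2 j).isLt; omega⟩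
    else ⟨r + (p.2 j : ℕ), by have := (p.2 j).isLt; omega⟩ with hxfun
  have hfilter : ∀ p, (Finset.univ.filter fun j => ((xfun p j : ℕ) < r)) = p.1.1.2 := by
    intro p
    ext j
    simp only [Finset.mem_filter, Finset.mem_univ, true_and, hxfun]
    by_cases hj : j ∈ p.1.1.2
    · simp only [if_pos hj]
      exact iff_of_true (p.2 j).isLt hj
    · simp only [if_neg hj]
      exact iff_of_false (by omega) hj
  have hmemD : ∀ p : ↥D × (Fin n → Fin r),
      p.1.1.1 ∈ K ∧ p.1.1.2 ∈ Finset.powersetCard p.1.1.1 (Finset.univ : Finset (Fin n)) := by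
    intro p
    exact Finset.mem_sigma.1 p.1.2
  have hcardS : ∀ p : ↥D × (Fin n → Fin r), (p.1.1.2 : Finset (Fin n)).card = p.1.1.1 :=
    fun p => (Finset.mem_powersetCard.1 (hmemD p).2).2
  set emb : ↥D × (Fin n → Fin r) → {x : Fin n → Fin (2 * r) //
      (n : ℝ) / 2 - 0.34 * Real.sqrt n ≤ ((Finset.univ.filter fun j => (x j : ℕ) < r).card : ℝ) ∧
      ((Finset.univ.filter fun j => (x j : ℕ) < r).card : ℝ) ≤ (n : ℝ) / 2 + 0.34 * Real.sqrt n} :=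
    fun p => ⟨xfun p, by
      rw [hfilter p, hcardS p]
      have hK' := (Finset.mem_filter.1 (hmemD p).1).2
      exact hK'⟩ with hemb
  have hinj : Function.Injective emb := by
    rintro ⟨⟨⟨ka, Sa⟩, hda⟩, fa⟩ ⟨⟨⟨kb, Sb⟩, hdb⟩, fb⟩ hab
    have hx : xfun (⟨⟨⟨ka, Sa⟩, hda⟩, fa⟩) = xfun (⟨⟨⟨kb, Sb⟩, hdb⟩, fb⟩) :=
      congrArg Subtype.val hab
    have hS : Sa = Sb := by
      have h1 := hfilter (⟨⟨⟨ka, Sa⟩, hda⟩, fa⟩)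
      have h2 := hfilter (⟨⟨⟨kb, Sb⟩, hdb⟩, fb⟩)
      simp only at h1 h2
      rw [← h1, ← h2, hx]
    have hk : ka = kb := by
      have h1 := hcardS (⟨⟨⟨ka, Sa⟩, hda⟩, fa⟩)
      have h2 := hcardS (⟨⟨⟨kb, Sb⟩, hdb⟩, fb⟩)
      simp only at h1 h2
      rw [← h1, ← h2, hS]
    have hf : fa = fb := by
      funext j
      have hxj := congrFun hx j
      simp only [hxfun] at hxj
      by_cases hj : j ∈ Sa
      · have hj' : j ∈ Sb := hS ▸ hj
        simp only [if_pos hj, if_pos hj'] at hxj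
        have := congrArg Fin.val hxj
        simp only at this
        exact Fin.ext this
      · have hj' : j ∉ Sb := hS ▸ hj
        simp only [if_neg hj, if_neg hj'] at hxj
        have := congrArg Fin.val hxj
        simp only at this
        exact Fin.ext (by omega)
    subst hS hk hf
    rfl
  have hcard : Nat.card (↥D × (Fin n → Fin r)) = D.card * r^n := by
    rw [Nat.card_prod]
    congr 1
    · rw [Nat.card_eq_fintype_card, Fintype.card_coe]
    · simp [Nat.card_eq_fintype_card]
  have hDcard : D.card = ∑ k ∈ K, n.choose k := by
    rw [hDdef, Finset.card_sigma]
    apply Finset.sum_congr rfl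
    intro k _
    rw [Finset.card_powersetCard, Finset.card_univ, Fintype.card_fin]
  calc (2*r)^(n-1) = 2^(n-1) * r^(n-1) := mul_pow 2 r (n-1)
    _ ≤ 2^(n-1) * r^n := by
        apply Nat.mul_le_mul_left
        exact Nat.pow_le_pow_right hr (by omega)
    _ ≤ (∑ k ∈ K, n.choose k) * r^n := Nat.mul_le_mul_right _ hW
    _ = Nat.card (↥D × (Fin n → Fin r)) := by rw [hcard, hDcard]
    _ ≤ Nat.card _ := Nat.card_le_card_of_injective emb hinj


/-- For every even `q = 2r` with `r ≥ 1`, there exists `N` such that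
for all `n ≥ N`, the number of `q`-ary sequences of length `n` whose
lower-half-symbol count lies in `[n/2 - 0.34√n, n/2 + 0.34√n]` is at least `q^(n-1)`. -/
theorem exists_N_card_polarity_balanced_ge (r : ℕ) (hr : 1 ≤ r) :
    ∃ N : ℕ, ∀ n : ℕ, N ≤ n →
      (2 * r) ^ (n - 1) ≤ Nat.card {x : Fin n → Fin (2 * r) //
        (n : ℝ) / 2 - 0.34 * Real.sqrt n ≤ ((Finset.univ.filter fun j => (x j : ℕ) < r).card : ℝ) ∧
        ((Finset.univ.filter fun j => (x j : ℕ) < r).card : ℝ) ≤ (n : ℝ) / 2 + 0.34 * Real.sqrt n} :=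
  exists_N_card_polarity_balanced_ge' r hr
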